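/- (Donsker–Varadhan representation, finite case) Let Ω be a nonempty finite set and let p, q be probability mass functions on Ω with p(ω) > 0 and q(ω) > 0 for all ω. Then the function f* = log(p/q) attains equality, ∑_ω p(ω)·f*(ω) − log( ∑_ω q(ω)·exp f*(ω) ) = D(p‖q), and consequently D(p‖q) = ⨆_{f : Ω → ℝ} ( ∑_ω p(ω)·f(ω) − log ∑_ω q(ω)·exp f(ω) ). -/

import Mathlib

lemma dv_upper {Ω : Type*} [Fintype Ω] [Nonempty Ω]
    (p q : Ω → ℝ)
    (hp0 : ∀ ω, 0 < p ω) (hp1 : ∑ ω : Ω, p ω = 1)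
    (hq0 : ∀ ω, 0 < q ω) (f : Ω → ℝ) :
    (∑ ω : Ω, p ω * f ω) - Real.log (∑ ω : Ω, q ω * Real.exp (f ω))
      ≤ ∑ ω : Ω, p ω * Real.log (p ω / q ω) := by
  set Z : ℝ := ∑ ω : Ω, q ω * Real.exp (f ω) with hZ
  have hZpos : 0 < Z := Finset.sum_pos (fun ω _ => mul_pos (hq0 ω) (Real.exp_pos _))
    Finset.univ_nonempty
  have key : ∑ ω : Ω, p ω * (f ω - Real.log (p ω / q ω) - Real.log Z) ≤ 0 := by
    have h1 : ∀ ω : Ω, p ω * (f ω - Real.log (p ω / q ω) - Real.log Z)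
        ≤ p ω * (q ω * Real.exp (f ω) / (p ω * Z) - 1) := by
      intro ω
      have hx : 0 < q ω * Real.exp (f ω) / (p ω * Z) :=
        div_pos (mul_pos (hq0 ω) (Real.exp_pos _)) (mul_pos (hp0 ω) hZpos)
      have hlog : Real.log (q ω * Real.exp (f ω) / (p ω * Z))
          = f ω - Real.log (p ω / q ω) - Real.log Z := by
        rw [Real.log_div (mul_pos (hq0 ω) (Real.exp_pos _)).ne'
          (mul_pos (hp0 ω) hZpos).ne', Real.log_mul (hq0 ω).ne'
          (Real.exp_pos _).ne', Real.log_exp, Real.log_mul (hp0 ω).ne' hZpos.ne',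
          Real.log_div (hp0 ω).ne' (hq0 ω).ne']
        ring
      rw [← hlog]
      exact mul_le_mul_of_nonneg_left (Real.log_le_sub_one_of_pos hx) (hp0 ω).le
    calc ∑ ω : Ω, p ω * (f ω - Real.log (p ω / q ω) - Real.log Z)
        ≤ ∑ ω : Ω, p ω * (q ω * Real.exp (f ω) / (p ω * Z) - 1) :=
          Finset.sum_le_sum fun ω _ => h1 ω
      _ = ∑ ω : Ω, (q ω * Real.exp (f ω) / Z - p ω) := by
          refine Finset.sum_congr rfl fun ω _ => ?_
          field_simp [hZpos.ne', (hp0 ω).ne']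
      _ = (∑ ω : Ω, q ω * Real.exp (f ω)) / Z - ∑ ω : Ω, p ω := by
          rw [Finset.sum_sub_distrib, Finset.sum_div]
      _ = 0 := by rw [← hZ, div_self hZpos.ne', hp1, sub_self]
  have expand : ∑ ω : Ω, p ω * (f ω - Real.log (p ω / q ω) - Real.log Z)
      = (∑ ω : Ω, p ω * f ω) - (∑ ω : Ω, p ω * Real.log (p ω / q ω)) - Real.log Z := by
    simp only [mul_sub, Finset.sum_sub_distrib, ← Finset.sum_mul, hp1, one_mul]
  linarith [key, expand ▸ key]

theorem donsker_varadhan_representation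
    {Ω : Type*} [Fintype Ω] [Nonempty Ω]
    (p q : Ω → ℝ)
    (hp0 : ∀ ω, 0 < p ω) (hp1 : ∑ ω : Ω, p ω = 1)
    (hq0 : ∀ ω, 0 < q ω) (hq1 : ∑ ω : Ω, q ω = 1) :
    ((∑ ω : Ω, p ω * Real.log (p ω / q ω))
        - Real.log (∑ ω : Ω, q ω * Real.exp (Real.log (p ω / q ω)))
      = ∑ ω ∈ Finset.univ.filter (fun ω : Ω => 0 < p ω),
          p ω * Real.log (p ω / q ω))
    ∧ (∑ ω ∈ Finset.univ.filter (fun ω : Ω => 0 < p ω),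
          p ω * Real.log (p ω / q ω))
        = ⨆ f : Ω → ℝ,
            ((∑ ω : Ω, p ω * f ω) - Real.log (∑ ω : Ω, q ω * Real.exp (f ω))) := by
  have hfilter : Finset.univ.filter (fun ω : Ω => 0 < p ω) = Finset.univ := by
    ext ω; simp [hp0 ω]
  have hZstar : ∑ ω : Ω, q ω * Real.exp (Real.log (p ω / q ω)) = 1 := by
    have : ∀ ω : Ω, q ω * Real.exp (Real.log (p ω / q ω)) = p ω := by
      intro ω
      rw [Real.exp_log (div_pos (hp0 ω) (hq0 ω))]
      rw [mul_comm, div_mul_cancel₀ _ (hq0 ω).ne']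
    simp only [this, hp1]
  have heq : (∑ ω : Ω, p ω * Real.log (p ω / q ω))
        - Real.log (∑ ω : Ω, q ω * Real.exp (Real.log (p ω / q ω)))
      = ∑ ω ∈ Finset.univ.filter (fun ω : Ω => 0 < p ω),
          p ω * Real.log (p ω / q ω) := by
    rw [hZstar, Real.log_one, sub_zero, hfilter]
  refine ⟨heq, ?_⟩
  rw [hfilter]
  apply le_antisymm
  · have := heq
    rw [hfilter] at this
    rw [← this]
    exact le_ciSup ⟨∑ ω : Ω, p ω * Real.log (p ω / q ω),
      Set.forall_mem_range.2 fun f => dv_upper p q hp0 hp1 hq0 f⟩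
      (fun ω => Real.log (p ω / q ω))
  · exact ciSup_le fun f => dv_upper p q hp0 hp1 hq0 f
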